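/- Let H be a linear hypergraph with at most n edges, and let v be a vertex with d(v) > √n. Then the number of vertices u adjacent to v with d(u) ≥ d(v) is strictly less than n. -/

import Mathlib

open scoped Classical

/-- A finite hypergraph is given by its finite set of edges, each a finite set of vertices.
`Linear E` means any two distinct edges share at most one vertex. -/
def HG.Linear {V : Type*} (E : Finset (Finset V)) : Prop :=
  ∀ e₁ ∈ E, ∀ e₂ ∈ E, e₁ ≠ e₂ → (e₁ ∩ e₂).card ≤ 1

/-- The degree of a vertex: the number of edges containing it. -/
noncomputable def HG.deg {V : Type*} (E : Finset (Finset V)) (v : V) : ℕ :=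
  (E.filter (fun e => v ∈ e)).card

/-- The vertex set of the hypergraph: the union of its edges. -/
noncomputable def HG.verts {V : Type*} (E : Finset (Finset V)) : Finset V := E.sup id

/-- The adjacency of a vertex `v`: vertices distinct from `v` sharing an edge with `v`. -/
noncomputable def HG.adj {V : Type*} (E : Finset (Finset V)) (v : V) : Finset V :=
  (HG.verts E).filter (fun u => u ≠ v ∧ ∃ e ∈ E, v ∈ e ∧ u ∈ e)

/-- A proper coloring: vertices lying in a common edge receive distinct colors. -/
def HG.Proper {V : Type*} {m : ℕ} (E : Finset (Finset V)) (f : V → Fin m) : Prop :=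
  ∀ e ∈ E, ∀ u ∈ e, ∀ w ∈ e, u ≠ w → f u ≠ f w

theorem stmt10 {V : Type*} [DecidableEq V] (n : ℕ)
    (E : Finset (Finset V)) (hlin : HG.Linear E) (hE : E.card ≤ n)
    (v : V) (hdv : Real.sqrt n < (HG.deg E v : ℝ)) :
    ((HG.adj E v).filter (fun u => HG.deg E v ≤ HG.deg E u)).card < n := by
  have hdeg_eq : ∀ u : V, HG.deg E u = (E.filter (fun e => u ∈ e)).card := by
    intro u
    rw [HG.deg, Finset.filter_congr_decidable]
  set d := HG.deg E v with hd
  have hd0 : 0 < d := by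
    by_contra h
    push_neg at h
    interval_cases d
    simp only [Nat.cast_zero] at hdv
    exact absurd hdv (not_lt.mpr (Real.sqrt_nonneg _))
  have hn_lt : n < d * d := by
    have h1 : Real.sqrt n * Real.sqrt n = (n : ℝ) :=
      Real.mul_self_sqrt (by positivity)
    have h2 : Real.sqrt n ≥ 0 := Real.sqrt_nonneg _
    have : (n : ℝ) < (d : ℝ) * d := by nlinarith
    exact_mod_cast this
  set S := (HG.adj E v).filter (fun u => HG.deg E v ≤ HG.deg E u) with hS
  set T := E.filter (fun e => v ∉ e) with hT
  have hSmem : ∀ u ∈ S, u ≠ v ∧ d ≤ HG.deg E u ∧ ∃ e ∈ E, v ∈ e ∧ u ∈ e := by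
    intro u hu
    simp only [hS, HG.adj, Finset.mem_filter] at hu
    exact ⟨hu.1.2.1, hu.2, hu.1.2.2⟩
  -- double counting
  have hsum : ∑ u ∈ S, (T.filter (fun f => u ∈ f)).card
      = ∑ f ∈ T, (S.filter (fun u => u ∈ f)).card := by
    simp only [Finset.card_filter]
    rw [Finset.sum_comm]
  -- lower bound each left term
  have hlow : ∀ u ∈ S, d - 1 ≤ (T.filter (fun f => u ∈ f)).card := by
    intro u hu
    obtain ⟨hune, hdeg, e, he, hve, hue⟩ := hSmem u hu
    -- split the edges through u
    have e1 : ((E.filter (fun f => u ∈ f)).filter (fun f => v ∈ f)).card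
        + ((E.filter (fun f => u ∈ f)).filter (fun f => ¬ v ∈ f)).card
        = (E.filter (fun f => u ∈ f)).card :=
      Finset.card_filter_add_card_filter_not _
    have e2 : T.filter (fun f => u ∈ f)
        = (E.filter (fun f => u ∈ f)).filter (fun f => ¬ v ∈ f) := by
      ext f
      simp only [hT, Finset.mem_filter]
      tauto
    -- edges through u containing v : at most one
    have hone : ((E.filter (fun f => u ∈ f)).filter (fun f => v ∈ f)).card ≤ 1 := by
      rw [Finset.card_le_one]
      intro a ha b hb
      simp only [Finset.mem_filter] at ha hb
      by_contra hab
      have hcard := hlin a ha.1.1 b hb.1.1 hab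
      exact hune (Finset.card_le_one.mp hcard u
        ((@Finset.mem_inter V (fun a b => Classical.propDecidable (a = b)) _ _ _).mpr ⟨ha.1.2, hb.1.2⟩) v ((@Finset.mem_inter V (fun a b => Classical.propDecidable (a = b)) _ _ _).mpr ⟨ha.2, hb.2⟩))
    have hdu := hdeg_eq u
    rw [e2]
    omega
  -- upper bound each right term
  have hup : ∀ f ∈ T, (S.filter (fun u => u ∈ f)).card ≤ d := by
    intro f hf
    simp only [hT, Finset.mem_filter] at hf
    rw [hd, hdeg_eq]
    apply Finset.card_le_card_of_injOn
      (fun u => if h : ∃ e ∈ E, v ∈ e ∧ u ∈ e then h.choose else ∅)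
    · intro u hu
      simp only [Finset.mem_coe, Finset.mem_filter] at hu
      obtain ⟨hune, hdeg, hex⟩ := hSmem u hu.1
      beta_reduce
      rw [dif_pos hex]
      simp only [Finset.mem_coe, Finset.mem_filter]
      exact ⟨hex.choose_spec.1, hex.choose_spec.2.1⟩
    · intro u₁ h1 u₂ h2 heq
      simp only [Finset.coe_filter, Set.mem_setOf_eq] at h1 h2
      obtain ⟨h1ne, h1d, hex1⟩ := hSmem u₁ h1.1
      obtain ⟨h2ne, h2d, hex2⟩ := hSmem u₂ h2.1
      have heq' : (if h : ∃ e ∈ E, v ∈ e ∧ u₁ ∈ e then h.choose else ∅)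
          = (if h : ∃ e ∈ E, v ∈ e ∧ u₂ ∈ e then h.choose else ∅) := heq
      rw [dif_pos hex1, dif_pos hex2] at heq'
      set e := hex1.choose with he
      have he1 : e ∈ E ∧ v ∈ e ∧ u₁ ∈ e := hex1.choose_spec
      have he2 : u₂ ∈ e := by rw [heq']; exact hex2.choose_spec.2.2
      have hef : e ≠ f := fun h => hf.2 (h ▸ he1.2.1)
      have hcard := hlin e he1.1 f hf.1 hef
      exact Finset.card_le_one.mp hcard u₁
        ((@Finset.mem_inter V (fun a b => Classical.propDecidable (a = b)) _ _ _).mpr ⟨he1.2.2, h1.2⟩) u₂ ((@Finset.mem_inter V (fun a b => Classical.propDecidable (a = b)) _ _ _).mpr ⟨he2, h2.2⟩)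
  -- counting facts
  have e3 : (E.filter (fun e => v ∈ e)).card + T.card = E.card := by
    rw [hT]
    exact Finset.card_filter_add_card_filter_not _
  have hdv' := hdeg_eq v
  have hTcard : T.card ≤ n - d := by omega
  have hdn : d ≤ n := by omega
  have hmain : (d - 1) * S.card ≤ d * (n - d) := by
    calc (d - 1) * S.card = ∑ _u ∈ S, (d - 1) := by
          rw [Finset.sum_const, smul_eq_mul, mul_comm]
    _ ≤ ∑ u ∈ S, (T.filter (fun f => u ∈ f)).card := Finset.sum_le_sum hlow
    _ = ∑ f ∈ T, (S.filter (fun u => u ∈ f)).card := hsum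
    _ ≤ ∑ _f ∈ T, d := Finset.sum_le_sum hup
    _ = T.card * d := by rw [Finset.sum_const, smul_eq_mul]
    _ ≤ (n - d) * d := Nat.mul_le_mul_right _ hTcard
    _ = d * (n - d) := mul_comm _ _
  by_contra hcon
  push_neg at hcon
  have h1 : (d - 1) * n ≤ d * (n - d) :=
    le_trans (Nat.mul_le_mul_left _ hcon) hmain
  have hz : ((d : ℤ) - 1) * n ≤ (d : ℤ) * ((n : ℤ) - d) := by
    have h2 := Int.ofNat_le.mpr h1
    push_cast [Nat.cast_sub hd0, Nat.cast_sub hdn] at h2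
    linarith
  have hz2 : (n : ℤ) < d * d := by exact_mod_cast hn_lt
  nlinarith [hz, hz2]
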